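/- Let n be an odd integer with n ≥ 5, and let m be an integer with m ≥ (5n−1)/2 and m ≥ 2n + 2. Then both permutations (3, n)(2n−1, 2n+1) and (2, n+1)(2n, 2n+2) — each a product of two disjoint transpositions — belong to the subgroup C(n, m) of S_m generated by the n-crossing permutations. -/
import Mathlib


/-- The underlying function of the `n`-crossing permutation `π_j` over `{1, …, m}` (as a
function on `ℕ`): it sends `j + k` to `j + n - 1 - k` for `0 ≤ k ≤ n - 1` and fixes all
other points. -/
def crossFun (n j i : ℕ) : ℕ :=
  if j ≤ i ∧ i < j + n then 2 * j + n - 1 - i else i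

lemma crossFun_involutive (n j : ℕ) : Function.Involutive (crossFun n j) := by
  intro i
  unfold crossFun
  split_ifs <;> omega

/-- The `n`-crossing permutation `π_j`, viewed as a permutation of `ℕ` fixing every point
outside `{j, …, j + n - 1}`. -/
def crossPerm (n j : ℕ) : Equiv.Perm ℕ :=
  Function.Involutive.toPerm _ (crossFun_involutive n j)

/-- `C n m` is the subgroup of the symmetric group `S_m` (realized as permutations of `ℕ`
supported on `{1, …, m}`) generated by the `n`-crossing permutations `π_1, …, π_{m-n+1}`. -/
def C (n m : ℕ) : Subgroup (Equiv.Perm ℕ) :=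
  Subgroup.closure {σ | ∃ j, 1 ≤ j ∧ j ≤ m - n + 1 ∧ σ = crossPerm n j}

lemma crossPerm_mem (n m j : ℕ) (h1 : 1 ≤ j) (h2 : j ≤ m - n + 1) :
    crossPerm n j ∈ C n m :=
  Subgroup.subset_closure ⟨j, h1, h2, rfl⟩

lemma crossPerm_apply (n j i : ℕ) : crossPerm n j i = crossFun n j i := rfl

/- Intermediate explicit permutations used in the factorization of the first target. -/
def M1 (t i : ℕ) : ℕ :=
  if 4 ≤ i ∧ i ≤ 2 * t + 2 then 2 * t + 6 - i
  else if i = 2 * t + 3 then 2 * t + 5 else if i = 2 * t + 5 then 2 * t + 3 else i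

def M2 (t i : ℕ) : ℕ :=
  if 4 ≤ i ∧ i ≤ 2 * t + 2 then 2 * t + 6 - i
  else if i = 4 * t + 1 then 4 * t + 3 else if i = 4 * t + 3 then 4 * t + 1 else i

def M3 (t i : ℕ) : ℕ :=
  if i = 3 then 2 * t + 3 else if i = 2 * t + 3 then 3
  else if i = 4 * t + 1 then 4 * t + 3 else if i = 4 * t + 3 then 4 * t + 1 else i

def M4 (t i : ℕ) : ℕ :=
  if i = 3 then 2 * t + 1 else if i = 2 * t + 1 then 3
  else if i = 4 * t + 1 then 4 * t + 3 else if i = 4 * t + 3 then 4 * t + 1 else i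

lemma m1 (t i : ℕ) (h5 : 2 ≤ t) :
    crossFun (2 * t + 1) 4 (crossFun (2 * t + 1) 5 (crossFun (2 * t + 1) 4 i)) = M1 t i := by
  simp only [crossFun, M1]; split_ifs <;> omega

lemma m2 (t i : ℕ) (h5 : 2 ≤ t) :
    crossFun (2 * t + 1) (2 * t + 3) (M1 t (crossFun (2 * t + 1) (2 * t + 3) i)) = M2 t i := by
  simp only [crossFun, M1, M2]; split_ifs <;> omega

lemma m3 (t i : ℕ) (h5 : 2 ≤ t) :
    crossFun (2 * t + 1) 3 (M2 t i) = M3 t i := by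
  simp only [crossFun, M2, M3]; split_ifs <;> omega

lemma m4 (t i : ℕ) (h5 : 2 ≤ t) :
    crossFun (2 * t + 1) (t + 2) (M3 t (crossFun (2 * t + 1) (t + 2) i)) = M4 t i := by
  simp only [crossFun, M3, M4]; split_ifs <;> omega

/- Intermediate explicit permutations used in the factorization of the second target. -/
def N1 (t i : ℕ) : ℕ :=
  if i = 2 * t then 2 * t + 2 else if i = 2 * t + 2 then 2 * t
  else if 2 * t + 3 ≤ i ∧ i ≤ 4 * t + 1 then 6 * t + 4 - i else i

def N2 (t i : ℕ) : ℕ :=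
  if i = 2 then 2 * t + 2 else if i = 2 * t + 2 then 2
  else if 2 * t + 3 ≤ i ∧ i ≤ 4 * t + 1 then 6 * t + 4 - i else i

def N3 (t i : ℕ) : ℕ :=
  if 2 * t + 3 ≤ i ∧ i ≤ 4 * t + 1 then 6 * t + 4 - i
  else if i = 4 * t + 2 then 4 * t + 4 else if i = 4 * t + 4 then 4 * t + 2 else i

def T2 (t i : ℕ) : ℕ :=
  if i = 2 then 2 * t + 2 else if i = 2 * t + 2 then 2
  else if i = 4 * t + 2 then 4 * t + 4 else if i = 4 * t + 4 then 4 * t + 2 else i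

lemma n1 (t i : ℕ) (h5 : 2 ≤ t) :
    crossFun (2 * t + 1) (2 * t + 1)
      (crossFun (2 * t + 1) (2 * t) (crossFun (2 * t + 1) (2 * t + 1) i)) = N1 t i := by
  simp only [crossFun, N1]; split_ifs <;> omega

lemma n2 (t i : ℕ) (h5 : 2 ≤ t) :
    crossFun (2 * t + 1) 1 (N1 t (crossFun (2 * t + 1) 1 i)) = N2 t i := by
  simp only [crossFun, N1, N2]; split_ifs <;> omega

lemma n3 (t i : ℕ) (h5 : 2 ≤ t) :
    crossFun (2 * t + 1) (2 * t + 3)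
      (crossFun (2 * t + 1) (2 * t + 4) (crossFun (2 * t + 1) (2 * t + 3) i)) = N3 t i := by
  simp only [crossFun, N3]; split_ifs <;> omega

lemma n4 (t i : ℕ) (h5 : 2 ≤ t) : N3 t (N2 t i) = T2 t i := by
  simp only [N2, N3, T2]; split_ifs <;> omega

lemma key1 (t : ℕ) (h5 : 2 ≤ t) :
    Equiv.swap 3 (2 * t + 1) * Equiv.swap (2 * (2 * t + 1) - 1) (2 * (2 * t + 1) + 1) =
      crossPerm (2 * t + 1) (t + 2) * crossPerm (2 * t + 1) 3 *
      crossPerm (2 * t + 1) (2 * t + 3) * crossPerm (2 * t + 1) 4 *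
      crossPerm (2 * t + 1) 5 * crossPerm (2 * t + 1) 4 *
      crossPerm (2 * t + 1) (2 * t + 3) * crossPerm (2 * t + 1) (t + 2) := by
  ext i
  simp only [Equiv.Perm.mul_apply, crossPerm_apply]
  rw [m1 t _ h5, m2 t _ h5, m3 t _ h5, m4 t i h5]
  simp only [Equiv.swap_apply_def, M4]
  split_ifs <;> omega

lemma key2 (t : ℕ) (h5 : 2 ≤ t) :
    Equiv.swap 2 (2 * t + 1 + 1) * Equiv.swap (2 * (2 * t + 1)) (2 * (2 * t + 1) + 2) =
      crossPerm (2 * t + 1) (2 * t + 3) * crossPerm (2 * t + 1) (2 * t + 4) *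
      crossPerm (2 * t + 1) (2 * t + 3) * crossPerm (2 * t + 1) 1 *
      crossPerm (2 * t + 1) (2 * t + 1) * crossPerm (2 * t + 1) (2 * t) *
      crossPerm (2 * t + 1) (2 * t + 1) * crossPerm (2 * t + 1) 1 := by
  ext i
  simp only [Equiv.Perm.mul_apply, crossPerm_apply]
  rw [n1 t _ h5, n2 t i h5, n3 t _ h5, n4 t i h5]
  simp only [Equiv.swap_apply_def, T2]
  split_ifs <;> omega

theorem stmt8 (n : ℕ) (hn : Odd n) (hn5 : 5 ≤ n)
    (m : ℕ) (hm1 : (5 * n - 1) / 2 ≤ m) (hm2 : 2 * n + 2 ≤ m) :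
    Equiv.swap 3 n * Equiv.swap (2 * n - 1) (2 * n + 1) ∈ C n m ∧
    Equiv.swap 2 (n + 1) * Equiv.swap (2 * n) (2 * n + 2) ∈ C n m := by
  obtain ⟨t, ht⟩ := hn
  subst ht
  have h5 : 2 ≤ t := by omega
  have hmem : ∀ j, 1 ≤ j → j ≤ 2 * t + 4 → crossPerm (2 * t + 1) j ∈ C (2 * t + 1) m := by
    intro j hj1 hj2
    exact crossPerm_mem _ m j hj1 (by omega)
  constructor
  · rw [key1 t h5]
    exact mul_mem (mul_mem (mul_mem (mul_mem (mul_mem (mul_mem (mul_mem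
      (hmem _ (by omega) (by omega)) (hmem _ (by omega) (by omega)))
      (hmem _ (by omega) (by omega))) (hmem _ (by omega) (by omega)))
      (hmem _ (by omega) (by omega))) (hmem _ (by omega) (by omega)))
      (hmem _ (by omega) (by omega))) (hmem _ (by omega) (by omega))
  · rw [key2 t h5]
    exact mul_mem (mul_mem (mul_mem (mul_mem (mul_mem (mul_mem (mul_mem
      (hmem _ (by omega) (by omega)) (hmem _ (by omega) (by omega)))
      (hmem _ (by omega) (by omega))) (hmem _ (by omega) (by omega)))
      (hmem _ (by omega) (by omega))) (hmem _ (by omega) (by omega)))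
      (hmem _ (by omega) (by omega))) (hmem _ (by omega) (by omega))
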